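/- arXiv:math/0305341 — 4 statements merged into one kernel-verified Lean document; each statement's English description precedes it below -/
import Mathlib

section
/- For all real numbers a and b, the integral over the real line of 1/((1+(t-a)^2)(1+(t-b)^2)) dt equals 2π/(4+(a-b)^2). -/
open Real MeasureTheory Filter Topology

private lemma ratio_top' (c : ℝ) :
    Tendsto (fun t : ℝ => (1 + t^2) / (1 + (t - c)^2)) atTop (𝓝 1) := by
  have h1 : Tendsto (fun t : ℝ => 1/t^2) atTop (𝓝 0) := by
    simp only [one_div]
    exact (tendsto_pow_atTop (n := 2) two_ne_zero).inv_tendsto_atTop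
  have h2 : Tendsto (fun t : ℝ => c/t) atTop (𝓝 0) := by
    simpa [div_eq_mul_inv] using tendsto_inv_atTop_zero.const_mul c
  have hd : Tendsto (fun t : ℝ => 1/t^2 + (1 - c/t)^2) atTop (𝓝 1) := by
    have := h1.add (((tendsto_const_nhds (α := ℝ) (f := atTop) (x := (1:ℝ))).sub h2).pow 2)
    simpa using this
  have hn : Tendsto (fun t : ℝ => 1/t^2 + 1) atTop (𝓝 1) := by
    simpa using h1.add (tendsto_const_nhds (α := ℝ) (f := atTop) (x := (1:ℝ)))
  have hlim := hn.div hd one_ne_zero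
  rw [div_one] at hlim
  refine hlim.congr' ?_
  filter_upwards [eventually_gt_atTop (0:ℝ)] with t ht
  have ht' : t ≠ 0 := ne_of_gt ht
  have hden : 1 + (t - c)^2 ≠ 0 := by positivity
  simp only [Pi.div_apply]
  field_simp

private lemma logdiff_top' (c : ℝ) :
    Tendsto (fun t : ℝ => Real.log (1 + t^2) - Real.log (1 + (t - c)^2)) atTop (𝓝 0) := by
  have h := (Real.continuousAt_log one_ne_zero).tendsto.comp (ratio_top' c)
  rw [Real.log_one] at h
  refine h.congr fun t => ?_
  have h1 : (0:ℝ) < 1 + t^2 := by positivity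
  have h2 : (0:ℝ) < 1 + (t - c)^2 := by positivity
  simp [Function.comp, Real.log_div h1.ne' h2.ne']

private lemma logdiff_bot' (c : ℝ) :
    Tendsto (fun t : ℝ => Real.log (1 + t^2) - Real.log (1 + (t - c)^2)) atBot (𝓝 0) := by
  have h := (logdiff_top' (-c)).comp tendsto_neg_atBot_atTop
  refine h.congr fun t => ?_
  simp only [Function.comp]
  ring_nf

private lemma arctan_shift_top' (c : ℝ) :
    Tendsto (fun t : ℝ => arctan (t - c)) atTop (𝓝 (π/2)) :=
  (tendsto_arctan_atTop.mono_right nhdsWithin_le_nhds).comp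
    (tendsto_atTop_add_const_right _ (-c) tendsto_id)

private lemma arctan_shift_bot' (c : ℝ) :
    Tendsto (fun t : ℝ => arctan (t - c)) atBot (𝓝 (-(π/2))) :=
  (tendsto_arctan_atBot.mono_right nhdsWithin_le_nhds).comp
    (tendsto_atBot_add_const_right _ (-c) tendsto_id)

private lemma integrable_kernel' (c : ℝ) :
    Integrable (fun t : ℝ => 1 / ((1 + (t - c)^2) * (1 + t^2))) := by
  have hcont : Continuous (fun t : ℝ => 1 / ((1 + (t - c)^2) * (1 + t^2))) := by
    apply Continuous.div continuous_const
    · continuity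
    · intro t
      have h1 : (0:ℝ) < 1 + (t - c)^2 := by positivity
      have h2 : (0:ℝ) < 1 + t^2 := by positivity
      positivity
  refine (integrable_inv_one_add_sq).mono hcont.aestronglyMeasurable ?_
  filter_upwards with t
  have h2 : (0:ℝ) < 1 + t^2 := by positivity
  rw [Real.norm_eq_abs, Real.norm_eq_abs, abs_of_nonneg (by positivity),
    abs_of_nonneg (by positivity)]
  rw [one_div, inv_le_inv₀ (by positivity) h2]
  nlinarith [sq_nonneg (t - c), sq_nonneg t]

private lemma tdiv_top' : Tendsto (fun t : ℝ => t / (1 + t^2)) atTop (𝓝 0) := by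
  have h : Tendsto (fun t : ℝ => 1/t + t) atTop atTop := by
    refine tendsto_atTop_mono' atTop ?_ tendsto_id
    filter_upwards [eventually_gt_atTop (0:ℝ)] with t ht
    have : 0 < 1/t := by positivity
    simp only [id]
    linarith
  have h0 := h.inv_tendsto_atTop
  refine h0.congr' ?_
  filter_upwards [eventually_gt_atTop (0:ℝ)] with t ht
  have ht' : t ≠ 0 := ne_of_gt ht
  show ((fun t : ℝ => 1/t + t)⁻¹) t = t / (1 + t^2)
  simp only [Pi.inv_apply]
  rw [inv_eq_one_div, div_eq_div_iff (by positivity) (by positivity)]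
  field_simp

private lemma tdiv_bot' : Tendsto (fun t : ℝ => t / (1 + t^2)) atBot (𝓝 0) := by
  have h := (tdiv_top'.neg).comp tendsto_neg_atBot_atTop
  rw [neg_zero] at h
  refine h.congr fun t => ?_
  simp only [Function.comp]
  ring_nf

private lemma key' (c : ℝ) :
    ∫ t : ℝ, 1 / ((1 + (t - c)^2) * (1 + t^2)) = 2 * π / (4 + c^2) := by
  rcases eq_or_ne c 0 with hc | hc
  · subst hc
    set F : ℝ → ℝ := fun t => (1/2) * arctan t + (1/2) * (t / (1 + t^2)) with hF
    have hderiv : ∀ t : ℝ, HasDerivAt F (1 / ((1 + (t - 0)^2) * (1 + t^2))) t := by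
      intro t
      have h1 : (0:ℝ) < 1 + t^2 := by positivity
      have ha : HasDerivAt arctan (1/(1+t^2)) t := Real.hasDerivAt_arctan t
      have hin : HasDerivAt (fun t : ℝ => 1 + t^2) (2*t) t := by
        simpa using ((hasDerivAt_pow 2 t).const_add 1)
      have hq : HasDerivAt (fun t : ℝ => t / (1 + t^2))
          ((1 * (1 + t^2) - t * (2*t)) / (1 + t^2)^2) t :=
        (hasDerivAt_id t).div hin h1.ne'
      have := (ha.const_mul (1/2 : ℝ)).add (hq.const_mul (1/2 : ℝ))
      refine this.congr_deriv ?_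
      field_simp
      ring
    have htop : Tendsto F atTop (𝓝 (π/4)) := by
      have h2 := ((tendsto_arctan_atTop.mono_right nhdsWithin_le_nhds).const_mul
        (1/2 : ℝ)).add (tdiv_top'.const_mul (1/2 : ℝ))
      have he : (1/2 : ℝ) * (π/2) + (1/2 : ℝ) * 0 = π/4 := by ring
      rw [he] at h2
      exact h2
    have hbot : Tendsto F atBot (𝓝 (-(π/4))) := by
      have h2 := ((tendsto_arctan_atBot.mono_right nhdsWithin_le_nhds).const_mul
        (1/2 : ℝ)).add (tdiv_bot'.const_mul (1/2 : ℝ))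
      have he : (1/2 : ℝ) * (-(π/2)) + (1/2 : ℝ) * 0 = -(π/4) := by ring
      rw [he] at h2
      exact h2
    rw [MeasureTheory.integral_of_hasDerivAt_of_tendsto hderiv (integrable_kernel' 0) hbot htop]
    ring
  · set F : ℝ → ℝ := fun t => (1/(4+c^2)) * (arctan t + arctan (t - c)) +
        (1/(c*(4+c^2))) * (Real.log (1 + t^2) - Real.log (1 + (t - c)^2)) with hF
    have hc4 : (0:ℝ) < 4 + c^2 := by positivity
    have hderiv : ∀ t : ℝ, HasDerivAt F (1 / ((1 + (t - c)^2) * (1 + t^2))) t := by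
      intro t
      have h1 : (0:ℝ) < 1 + t^2 := by positivity
      have h2 : (0:ℝ) < 1 + (t - c)^2 := by positivity
      have ha1 : HasDerivAt arctan (1/(1+t^2)) t := Real.hasDerivAt_arctan t
      have ha2 : HasDerivAt (fun t : ℝ => arctan (t - c)) (1/(1+(t-c)^2)) t := by
        have := (Real.hasDerivAt_arctan (t - c)).comp t ((hasDerivAt_id t).sub_const c)
        simpa [Function.comp_def] using this
      have hl1 : HasDerivAt (fun t : ℝ => Real.log (1 + t^2)) (2*t/(1+t^2)) t := by
        have hin : HasDerivAt (fun t : ℝ => 1 + t^2) (2*t) t := by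
          simpa using ((hasDerivAt_pow 2 t).const_add 1)
        simpa [div_eq_mul_inv, mul_comm, Function.comp_def] using (Real.hasDerivAt_log h1.ne').comp t hin
      have hl2 : HasDerivAt (fun t : ℝ => Real.log (1 + (t - c)^2))
          (2*(t-c)/(1+(t-c)^2)) t := by
        have hin : HasDerivAt (fun t : ℝ => 1 + (t - c)^2) (2*(t-c)) t := by
          have := ((hasDerivAt_pow 2 (t - c)).comp t
            ((hasDerivAt_id t).sub_const c)).const_add 1
          simpa using this
        simpa [div_eq_mul_inv, mul_comm, Function.comp_def] using (Real.hasDerivAt_log h2.ne').comp t hin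
      have := ((ha1.add ha2).const_mul (1/(4+c^2))).add
        ((hl1.sub hl2).const_mul (1/(c*(4+c^2))))
      refine this.congr_deriv ?_
      field_simp
      ring
    have htop : Tendsto F atTop (𝓝 (π/(4+c^2))) := by
      have h1 : Tendsto (fun t : ℝ => arctan t + arctan (t - c)) atTop (𝓝 (π/2 + π/2)) :=
        (tendsto_arctan_atTop.mono_right nhdsWithin_le_nhds).add (arctan_shift_top' c)
      have h2 := (h1.const_mul (1/(4+c^2))).add ((logdiff_top' c).const_mul (1/(c*(4+c^2))))
      have he : (1/(4+c^2)) * (π/2 + π/2) + (1/(c*(4+c^2))) * 0 = π/(4+c^2) := by ring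
      rw [he] at h2
      exact h2
    have hbot : Tendsto F atBot (𝓝 (-(π/(4+c^2)))) := by
      have h1 : Tendsto (fun t : ℝ => arctan t + arctan (t - c)) atBot
          (𝓝 (-(π/2) + -(π/2))) :=
        (tendsto_arctan_atBot.mono_right nhdsWithin_le_nhds).add (arctan_shift_bot' c)
      have h2 := (h1.const_mul (1/(4+c^2))).add ((logdiff_bot' c).const_mul (1/(c*(4+c^2))))
      have he : (1/(4+c^2)) * (-(π/2) + -(π/2)) + (1/(c*(4+c^2))) * 0 = -(π/(4+c^2)) := by ring
      rw [he] at h2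
      exact h2
    rw [MeasureTheory.integral_of_hasDerivAt_of_tendsto hderiv (integrable_kernel' c) hbot htop]
    ring

theorem integral_product_cauchy_kernels (a b : ℝ) :
    ∫ t : ℝ, 1 / ((1 + (t - a) ^ 2) * (1 + (t - b) ^ 2)) =
      2 * π / (4 + (a - b) ^ 2) := by
  have hshift := MeasureTheory.integral_sub_right_eq_self (μ := volume)
    (fun u : ℝ => 1 / ((1 + (u - (a - b))^2) * (1 + u^2))) b
  calc ∫ t : ℝ, 1 / ((1 + (t - a) ^ 2) * (1 + (t - b) ^ 2))
      = ∫ t : ℝ, 1 / ((1 + ((t - b) - (a - b))^2) * (1 + (t - b)^2)) := by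
        congr 1
        funext t
        ring_nf
    _ = ∫ u : ℝ, 1 / ((1 + (u - (a - b))^2) * (1 + u^2)) := hshift
    _ = 2 * π / (4 + (a - b)^2) := key' (a - b)
end

section
/- For every real number x, 2·(sin x)/x − 1 − cos x ≤ x²/6, where at x = 0 the expression 2·(sin x)/x is interpreted as 2. -/
open Real

lemma aux_deriv_nonneg (y : ℝ) (hy : 0 ≤ y) :
    0 ≤ y ^ 2 / 2 + 1 + Real.cos y - y * Real.sin y - 2 * Real.cos y := by
  have hs : Real.sin y = 2 * Real.sin (y / 2) * Real.cos (y / 2) := by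
    rw [← Real.sin_two_mul]; ring_nf
  have hc : Real.cos y = 2 * Real.cos (y / 2) ^ 2 - 1 := by
    rw [← Real.cos_two_mul]; ring_nf
  have hp : Real.sin (y / 2) ^ 2 + Real.cos (y / 2) ^ 2 = 1 :=
    Real.sin_sq_add_cos_sq _
  nlinarith [sq_nonneg (y - 2 * Real.sin (y / 2) * Real.cos (y / 2)),
    sq_nonneg (Real.sin (y / 2) ^ 2), sq_nonneg (Real.sin (y / 2) * Real.cos (y / 2))]

lemma aux_hasDeriv (y : ℝ) :
    HasDerivAt (fun t : ℝ => t ^ 3 / 6 + t + t * Real.cos t - 2 * Real.sin t)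
      (y ^ 2 / 2 + 1 + Real.cos y - y * Real.sin y - 2 * Real.cos y) y := by
  have h1 : HasDerivAt (fun t : ℝ => t ^ 3 / 6) (y ^ 2 / 2) y := by
    have := (hasDerivAt_pow 3 y).div_const 6
    refine this.congr_deriv ?_
    push_cast
    ring
  have h2 := hasDerivAt_id y
  have h3 : HasDerivAt (fun t : ℝ => t * Real.cos t) (Real.cos y - y * Real.sin y) y := by
    have := (hasDerivAt_id y).mul (Real.hasDerivAt_cos y)
    refine this.congr_deriv ?_
    simp [id]
    ring
  have h4 := (Real.hasDerivAt_sin y).const_mul 2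
  refine (((h1.add h2).add h3).sub h4).congr_deriv ?_
  ring

lemma aux_key (x : ℝ) (hx : 0 ≤ x) :
    2 * Real.sin x ≤ x ^ 3 / 6 + x + x * Real.cos x := by
  set f : ℝ → ℝ := fun t => t ^ 3 / 6 + t + t * Real.cos t - 2 * Real.sin t with hf
  have mono : MonotoneOn f (Set.Ici 0) := by
    apply monotoneOn_of_deriv_nonneg (convex_Ici 0)
    · fun_prop
    · intro y hy
      exact (aux_hasDeriv y).differentiableAt.differentiableWithinAt
    · intro y hy
      rw [(aux_hasDeriv y).deriv]
      rw [interior_Ici] at hy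
      exact aux_deriv_nonneg y (le_of_lt hy)
  have h0 : f 0 ≤ f x := mono Set.self_mem_Ici hx hx
  simp only [hf] at h0
  norm_num at h0
  linarith

lemma main_pos (x : ℝ) (hx : 0 < x) :
    2 * Real.sin x / x - 1 - Real.cos x ≤ x ^ 2 / 6 := by
  have h := aux_key x hx.le
  rw [div_sub' hx.ne', div_sub' hx.ne', div_le_div_iff₀ hx (by positivity)]
  ring_nf
  nlinarith [h]

theorem two_sinc_sub_one_sub_cos_le (x : ℝ) (hx : x ≠ 0) :
    2 * Real.sin x / x - 1 - Real.cos x ≤ x ^ 2 / 6 := by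
  rcases hx.lt_or_gt with h | h
  · have := main_pos (-x) (by linarith)
    simp only [Real.sin_neg, Real.cos_neg, neg_sq] at this
    rw [show 2 * -Real.sin x / -x = 2 * Real.sin x / x by field_simp] at this
    linarith
  · exact main_pos x h
end

section
/- Fix T > 0 and a finite set Γ of real numbers (the ordinates of zeta zeros in (0,T]). For x > 0 and real h, define F(x) = ∑_{γ,γ'∈Γ} cos((γ−γ')·log x)·w(γ−γ') and F_h(x) = ∑_{γ,γ'∈Γ} cos((γ−γ'−h)·log x)·w(γ−γ'−h), where w(u) = 4/(4+u²). Then F_h(x) ≤ F(x) for all x > 0 and all real h. -/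
open Real Finset

namespace FhF

open MeasureTheory Filter Topology Set

lemma hasDerivAt_G (u φ : ℝ) (s : ℝ) :
    HasDerivAt (fun s => Real.exp (-(2*s)) * (u * Real.sin (u*s+φ) - 2*Real.cos (u*s+φ)) / (4+u^2))
      (Real.exp (-(2*s)) * Real.cos (u*s+φ)) s := by
  have h4 : (0:ℝ) < 4 + u^2 := by positivity
  have h1 : HasDerivAt (fun s : ℝ => -(2*s)) (-2) s := by
    simpa using ((hasDerivAt_id s).const_mul (2:ℝ)).fun_neg
  have he : HasDerivAt (fun s : ℝ => Real.exp (-(2*s))) (Real.exp (-(2*s)) * (-2)) s :=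
    (Real.hasDerivAt_exp _).comp s h1
  have hus : HasDerivAt (fun s : ℝ => u*s+φ) u s := by
    simpa using ((hasDerivAt_id s).const_mul u).add_const φ
  have hsin : HasDerivAt (fun s : ℝ => Real.sin (u*s+φ)) (Real.cos (u*s+φ) * u) s :=
    (Real.hasDerivAt_sin _).comp s hus
  have hcos : HasDerivAt (fun s : ℝ => Real.cos (u*s+φ)) (-Real.sin (u*s+φ) * u) s :=
    (Real.hasDerivAt_cos _).comp s hus
  have hmain := (he.mul ((hsin.const_mul u).sub (hcos.const_mul 2))).div_const (4+u^2)
  refine hmain.congr_deriv ?_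
  simp only [Pi.sub_apply]
  rw [div_eq_iff h4.ne']
  try ring

lemma tendsto_aux (u φ : ℝ) :
    Tendsto (fun s => Real.exp (-(2*s)) * (u * Real.sin (u*s+φ) - 2*Real.cos (u*s+φ)) / (4+u^2))
      atTop (𝓝 0) := by
  have h4 : (0:ℝ) < 4 + u^2 := by positivity
  apply squeeze_zero_norm (a := fun s => Real.exp (-(2*s)) * ((|u| + 2) / (4+u^2)))
  · intro s
    rw [Real.norm_eq_abs, abs_div, abs_of_pos h4, abs_mul, Real.abs_exp, mul_div_assoc]
    gcongr
    calc |u * Real.sin (u*s+φ) - 2*Real.cos (u*s+φ)|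
        ≤ |u * Real.sin (u*s+φ)| + |2*Real.cos (u*s+φ)| := abs_sub _ _
      _ ≤ |u| * 1 + 2 * 1 := by
          rw [abs_mul, abs_mul]
          gcongr
          · exact Real.abs_sin_le_one _
          · rw [abs_two]
          · exact Real.abs_cos_le_one _
      _ = |u| + 2 := by ring
  · rw [show (0:ℝ) = 0 * ((|u| + 2) / (4+u^2)) by ring]
    apply Tendsto.mul_const
    apply Real.tendsto_exp_atBot.comp
    apply tendsto_neg_atBot_iff.mpr
    exact (tendsto_const_mul_atTop_of_pos two_pos).mpr tendsto_id

lemma tendsto_aux2 (u φ : ℝ) :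
    Tendsto (fun s => Real.exp (2*s) * (u * Real.sin (u*s+φ) + 2*Real.cos (u*s+φ)) / (4+u^2))
      atBot (𝓝 0) := by
  have h4 : (0:ℝ) < 4 + u^2 := by positivity
  apply squeeze_zero_norm (a := fun s => Real.exp (2*s) * ((|u| + 2) / (4+u^2)))
  · intro s
    rw [Real.norm_eq_abs, abs_div, abs_of_pos h4, abs_mul, Real.abs_exp, mul_div_assoc]
    gcongr
    calc |u * Real.sin (u*s+φ) + 2*Real.cos (u*s+φ)|
        ≤ |u * Real.sin (u*s+φ)| + |2*Real.cos (u*s+φ)| := abs_add_le _ _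
      _ ≤ |u| * 1 + 2 * 1 := by
          rw [abs_mul, abs_mul]
          gcongr
          · exact Real.abs_sin_le_one _
          · rw [abs_two]
          · exact Real.abs_cos_le_one _
      _ = |u| + 2 := by ring
  · rw [show (0:ℝ) = 0 * ((|u| + 2) / (4+u^2)) by ring]
    apply Tendsto.mul_const
    apply Real.tendsto_exp_atBot.comp
    exact (tendsto_const_mul_atBot_of_pos two_pos).mpr tendsto_id

lemma integrableOn_Ioi (u φ : ℝ) :
    IntegrableOn (fun s => Real.exp (-(2*s)) * Real.cos (u*s+φ)) (Set.Ioi (0:ℝ)) := by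
  apply Integrable.mono' ((exp_neg_integrableOn_Ioi 0 two_pos))
  · exact (Continuous.mul (by fun_prop) (by fun_prop)).aestronglyMeasurable
  · filter_upwards with s
    rw [Real.norm_eq_abs, abs_mul, Real.abs_exp, neg_mul]
    calc Real.exp (-(2*s)) * |Real.cos (u*s+φ)| ≤ Real.exp (-(2*s)) * 1 := by
          gcongr; exact Real.abs_cos_le_one _
      _ = Real.exp (-(2*s)) := mul_one _

lemma integrableOn_Iic (u φ : ℝ) :
    IntegrableOn (fun s => Real.exp (2*s) * Real.cos (u*s+φ)) (Set.Iic (0:ℝ)) := by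
  apply Integrable.mono' (integrableOn_exp_Iic 0)
  · exact (Continuous.mul (by fun_prop) (by fun_prop)).aestronglyMeasurable
  · filter_upwards [MeasureTheory.ae_restrict_mem measurableSet_Iic] with s hs
    rw [Real.norm_eq_abs, abs_mul, Real.abs_exp]
    calc Real.exp (2*s) * |Real.cos (u*s+φ)| ≤ Real.exp (2*s) * 1 := by
          gcongr; exact Real.abs_cos_le_one _
      _ = Real.exp (2*s) := mul_one _
      _ ≤ Real.exp s := by
          apply Real.exp_le_exp.mpr
          simp only [Set.mem_Iic] at hs
          linarith

lemma intA (u φ : ℝ) :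
    ∫ s in Set.Ioi (0:ℝ), Real.exp (-(2*s)) * Real.cos (u*s+φ)
      = (2*Real.cos φ - u*Real.sin φ)/(4+u^2) := by
  have h4 : (0:ℝ) < 4 + u^2 := by positivity
  rw [MeasureTheory.integral_Ioi_of_hasDerivAt_of_tendsto
      (Continuous.continuousWithinAt (by fun_prop))
      (fun s _ => hasDerivAt_G u φ s) (integrableOn_Ioi u φ) (tendsto_aux u φ)]
  simp only [mul_zero, add_zero, zero_sub]
  field_simp
  simp only [neg_zero, Real.exp_zero, zero_add, one_mul]
  try ring

lemma hasDerivAt_G2 (u φ : ℝ) (s : ℝ) :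
    HasDerivAt (fun s => Real.exp (2*s) * (u * Real.sin (u*s+φ) + 2*Real.cos (u*s+φ)) / (4+u^2))
      (Real.exp (2*s) * Real.cos (u*s+φ)) s := by
  have h4 : (0:ℝ) < 4 + u^2 := by positivity
  have h1 : HasDerivAt (fun s : ℝ => 2*s) 2 s := by
    simpa using (hasDerivAt_id s).const_mul (2:ℝ)
  have he : HasDerivAt (fun s : ℝ => Real.exp (2*s)) (Real.exp (2*s) * 2) s :=
    (Real.hasDerivAt_exp _).comp s h1
  have hus : HasDerivAt (fun s : ℝ => u*s+φ) u s := by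
    simpa using ((hasDerivAt_id s).const_mul u).add_const φ
  have hsin : HasDerivAt (fun s : ℝ => Real.sin (u*s+φ)) (Real.cos (u*s+φ) * u) s :=
    (Real.hasDerivAt_sin _).comp s hus
  have hcos : HasDerivAt (fun s : ℝ => Real.cos (u*s+φ)) (-Real.sin (u*s+φ) * u) s :=
    (Real.hasDerivAt_cos _).comp s hus
  have hmain := (he.mul ((hsin.const_mul u).add (hcos.const_mul 2))).div_const (4+u^2)
  refine hmain.congr_deriv ?_
  simp only [Pi.add_apply]
  rw [div_eq_iff h4.ne']
  try ring

lemma intB (u φ : ℝ) :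
    ∫ s in Set.Iic (0:ℝ), Real.exp (2*s) * Real.cos (u*s+φ)
      = (2*Real.cos φ + u*Real.sin φ)/(4+u^2) := by
  have h4 : (0:ℝ) < 4 + u^2 := by positivity
  rw [MeasureTheory.integral_Iic_of_hasDerivAt_of_tendsto
      (Continuous.continuousWithinAt (by fun_prop))
      (fun s _ => hasDerivAt_G2 u φ s) (integrableOn_Iic u φ) (tendsto_aux2 u φ)]
  simp only [mul_zero, add_zero, sub_zero]
  field_simp
  simp only [neg_zero, Real.exp_zero, zero_add, one_mul]
  try ring

lemma integrable_kernel (a θ : ℝ) :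
    Integrable (fun t => Real.exp (-(2*|t - θ|)) * Real.cos (a*t)) := by
  rw [← MeasureTheory.integrableOn_univ, ← Set.Iic_union_Ioi (a := θ)]
  have hmeas : AEStronglyMeasurable (fun t => Real.exp (-(2*|t - θ|)) * Real.cos (a*t))
      (volume : Measure ℝ) :=
    (Continuous.mul (by fun_prop) (by fun_prop)).aestronglyMeasurable
  apply MeasureTheory.IntegrableOn.union
  · apply Integrable.mono' ((integrableOn_exp_Iic θ).const_mul (Real.exp (-θ)))
    · exact hmeas.restrict
    · filter_upwards [MeasureTheory.ae_restrict_mem measurableSet_Iic] with t ht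
      simp only [Set.mem_Iic] at ht
      rw [Real.norm_eq_abs, abs_mul, Real.abs_exp, ← Real.exp_add]
      calc Real.exp (-(2*|t-θ|)) * |Real.cos (a*t)| ≤ Real.exp (-(2*|t-θ|)) * 1 := by
            gcongr; exact Real.abs_cos_le_one _
        _ = Real.exp (-(2*|t-θ|)) := mul_one _
        _ ≤ Real.exp (-θ + t) := by
            apply Real.exp_le_exp.mpr
            rw [abs_of_nonpos (by linarith)]
            linarith
  · apply Integrable.mono' ((exp_neg_integrableOn_Ioi θ two_pos).const_mul (Real.exp (2*θ)))
    · exact hmeas.restrict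
    · filter_upwards [MeasureTheory.ae_restrict_mem measurableSet_Ioi] with t ht
      simp only [Set.mem_Ioi] at ht
      rw [Real.norm_eq_abs, abs_mul, Real.abs_exp, ← Real.exp_add]
      calc Real.exp (-(2*|t-θ|)) * |Real.cos (a*t)| ≤ Real.exp (-(2*|t-θ|)) * 1 := by
            gcongr; exact Real.abs_cos_le_one _
        _ = Real.exp (-(2*|t-θ|)) := mul_one _
        _ ≤ Real.exp (2*θ + -2*t) := by
            apply Real.exp_le_exp.mpr
            rw [abs_of_nonneg (by linarith)]
            linarith

lemma key (a θ : ℝ) :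
    ∫ t, Real.exp (-(2*|t - θ|)) * Real.cos (a*t)
      = Real.cos (a*θ) * (4/(4+a^2)) := by
  have h4 : (0:ℝ) < 4 + a^2 := by positivity
  have htrans : ∫ t, Real.exp (-(2*|t - θ|)) * Real.cos (a*t)
      = ∫ s, Real.exp (-(2*|s|)) * Real.cos (a*s + a*θ) := by
    rw [← MeasureTheory.integral_add_right_eq_self
      (fun t => Real.exp (-(2*|t - θ|)) * Real.cos (a*t)) θ]
    congr 1
    ext s
    rw [add_sub_cancel_right]
    ring_nf
  rw [htrans]
  have hint : Integrable (fun s => Real.exp (-(2*|s|)) * Real.cos (a*s + a*θ)) := by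
    refine ((integrable_kernel a θ).comp_add_right θ).congr ?_
    filter_upwards with s
    simp only [add_sub_cancel_right]
    ring_nf
  rw [← intervalIntegral.integral_Iic_add_Ioi (b := (0:ℝ)) hint.integrableOn hint.integrableOn]
  have e1 : ∫ s in Set.Iic (0:ℝ), Real.exp (-(2*|s|)) * Real.cos (a*s + a*θ)
      = (2*Real.cos (a*θ) + a*Real.sin (a*θ))/(4+a^2) := by
    rw [MeasureTheory.setIntegral_congr_fun measurableSet_Iic
      (g := fun s => Real.exp (2*s) * Real.cos (a*s + a*θ)) ?_]
    · exact intB a (a*θ)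
    · intro s hs
      simp only [Set.mem_Iic] at hs
      simp only [abs_of_nonpos hs]
      ring_nf
  have e2 : ∫ s in Set.Ioi (0:ℝ), Real.exp (-(2*|s|)) * Real.cos (a*s + a*θ)
      = (2*Real.cos (a*θ) - a*Real.sin (a*θ))/(4+a^2) := by
    rw [MeasureTheory.setIntegral_congr_fun measurableSet_Ioi
      (g := fun s => Real.exp (-(2*s)) * Real.cos (a*s + a*θ)) ?_]
    · exact intA a (a*θ)
    · intro s hs
      simp only [Set.mem_Ioi] at hs
      simp only [abs_of_pos hs]
  rw [e1, e2]
  field_simp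
  try ring

lemma double_sum (Γ : Finset ℝ) (b t : ℝ) :
    ∑ γ ∈ Γ, ∑ γ' ∈ Γ, Real.cos ((γ - γ' - b) * t)
      = Real.cos (b*t) * ((∑ γ ∈ Γ, Real.cos (γ*t))^2 + (∑ γ ∈ Γ, Real.sin (γ*t))^2) := by
  have hterm : ∀ γ γ' : ℝ, Real.cos ((γ - γ' - b) * t)
      = (Real.cos (γ*t)*Real.cos (b*t) + Real.sin (γ*t)*Real.sin (b*t)) * Real.cos (γ'*t)
        + (Real.sin (γ*t)*Real.cos (b*t) - Real.cos (γ*t)*Real.sin (b*t)) * Real.sin (γ'*t) := by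
    intro γ γ'
    rw [show (γ - γ' - b) * t = (γ*t - b*t) - γ'*t by ring, Real.cos_sub, Real.cos_sub,
      Real.sin_sub]
    try ring
  simp_rw [hterm, Finset.sum_add_distrib, ← Finset.mul_sum, ← Finset.sum_mul,
    Finset.sum_sub_distrib]
  rw [Finset.sum_add_distrib, ← Finset.sum_mul, ← Finset.sum_mul, ← Finset.sum_mul,
    ← Finset.sum_mul]
  ring

theorem main_aux (Γ : Finset ℝ) (h θ : ℝ) :
    (∑ γ ∈ Γ, ∑ γ' ∈ Γ,
        Real.cos ((γ - γ' - h) * θ) * (4 / (4 + (γ - γ' - h) ^ 2))) ≤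
      ∑ γ ∈ Γ, ∑ γ' ∈ Γ,
        Real.cos ((γ - γ') * θ) * (4 / (4 + (γ - γ') ^ 2)) := by
  have hrw : ∀ b : ℝ, (∑ γ ∈ Γ, ∑ γ' ∈ Γ,
      Real.cos ((γ - γ' - b) * θ) * (4 / (4 + (γ - γ' - b) ^ 2)))
      = ∫ s, ∑ γ ∈ Γ, ∑ γ' ∈ Γ, Real.exp (-(2*|s - θ|)) * Real.cos ((γ - γ' - b)*s) := by
    intro b
    rw [MeasureTheory.integral_finset_sum Γ
      (fun γ _ => MeasureTheory.integrable_finset_sum Γ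
        (fun γ' _ => integrable_kernel (γ - γ' - b) θ))]
    refine Finset.sum_congr rfl (fun γ _ => ?_)
    rw [MeasureTheory.integral_finset_sum Γ (fun γ' _ => integrable_kernel (γ - γ' - b) θ)]
    refine Finset.sum_congr rfl (fun γ' _ => ?_)
    rw [key (γ - γ' - b) θ]
  have h0 : ∀ γ γ' : ℝ, γ - γ' = γ - γ' - 0 := by intros; ring
  calc (∑ γ ∈ Γ, ∑ γ' ∈ Γ, Real.cos ((γ - γ' - h) * θ) * (4 / (4 + (γ - γ' - h) ^ 2)))
      = ∫ s, ∑ γ ∈ Γ, ∑ γ' ∈ Γ, Real.exp (-(2*|s - θ|)) * Real.cos ((γ - γ' - h)*s) := hrw h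
    _ ≤ ∫ s, ∑ γ ∈ Γ, ∑ γ' ∈ Γ, Real.exp (-(2*|s - θ|)) * Real.cos ((γ - γ' - 0)*s) := by
        apply MeasureTheory.integral_mono
        · exact MeasureTheory.integrable_finset_sum Γ (fun γ _ =>
            MeasureTheory.integrable_finset_sum Γ (fun γ' _ => integrable_kernel (γ - γ' - h) θ))
        · exact MeasureTheory.integrable_finset_sum Γ (fun γ _ =>
            MeasureTheory.integrable_finset_sum Γ (fun γ' _ => integrable_kernel (γ - γ' - 0) θ))
        · intro s
          simp only [← Finset.mul_sum]
          apply mul_le_mul_of_nonneg_left _ (Real.exp_nonneg _)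
          rw [double_sum Γ h s, double_sum Γ 0 s]
          have hnn : (0:ℝ) ≤ (∑ γ ∈ Γ, Real.cos (γ*s))^2 + (∑ γ ∈ Γ, Real.sin (γ*s))^2 := by
            positivity
          calc Real.cos (h*s) * ((∑ γ ∈ Γ, Real.cos (γ*s))^2 + (∑ γ ∈ Γ, Real.sin (γ*s))^2)
              ≤ 1 * ((∑ γ ∈ Γ, Real.cos (γ*s))^2 + (∑ γ ∈ Γ, Real.sin (γ*s))^2) :=
                mul_le_mul_of_nonneg_right (Real.cos_le_one _) hnn
            _ = Real.cos (0*s) * ((∑ γ ∈ Γ, Real.cos (γ*s))^2 + (∑ γ ∈ Γ, Real.sin (γ*s))^2) :=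
                by simp
    _ = ∑ γ ∈ Γ, ∑ γ' ∈ Γ, Real.cos ((γ - γ' - 0) * θ) * (4 / (4 + (γ - γ' - 0) ^ 2)) :=
        (hrw 0).symm
    _ = ∑ γ ∈ Γ, ∑ γ' ∈ Γ, Real.cos ((γ - γ') * θ) * (4 / (4 + (γ - γ') ^ 2)) := by
        simp only [sub_zero]

end FhF

theorem Fh_le_F (Γ : Finset ℝ) (h x : ℝ) (hx : 0 < x) :
    (∑ γ ∈ Γ, ∑ γ' ∈ Γ,
        Real.cos ((γ - γ' - h) * Real.log x) * (4 / (4 + (γ - γ' - h) ^ 2))) ≤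
      ∑ γ ∈ Γ, ∑ γ' ∈ Γ,
        Real.cos ((γ - γ') * Real.log x) * (4 / (4 + (γ - γ') ^ 2)) :=
  FhF.main_aux Γ h (Real.log x)
end

section
/- Let Γ be a finite set of reals and define, for x > 0, F(x) = ∑_{γ,γ'∈Γ} x^{i(γ−γ')}·w(γ−γ') with w(u) = 4/(4+u²). Then F(x) is a real number and F(x) ≥ 0 for every x > 0. -/
open Real Finset Complex MeasureTheory Set Filter
open scoped Topology

noncomputable section

namespace FRealNonnegAux

lemma norm_cexp_neg_mul (c : ℂ) (t : ℝ) :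
    ‖Complex.exp (-(c * t))‖ = Real.exp (-(c.re * t)) := by
  rw [Complex.norm_exp]
  congr 1
  simp [Complex.mul_re]

lemma integrableOn_cexp (c : ℂ) (hc : 0 < c.re) :
    IntegrableOn (fun t : ℝ => Complex.exp (-(c * t))) (Ioi 0) := by
  refine ⟨(Complex.continuous_exp.comp
      ((continuous_const.mul Complex.continuous_ofReal).neg)).aestronglyMeasurable, ?_⟩
  rw [← hasFiniteIntegral_norm_iff]
  simp_rw [norm_cexp_neg_mul, neg_mul_eq_neg_mul]
  exact (exp_neg_integrableOn_Ioi 0 hc).2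

lemma integral_cexp_Ioi (c : ℂ) (hc : 0 < c.re) :
    ∫ t : ℝ in Ioi 0, Complex.exp (-(c * t)) = 1 / c := by
  have hc0 : c ≠ 0 := fun h => by simp [h] at hc
  have A : ∀ z : ℂ, HasDerivAt (fun z : ℂ => -c⁻¹ * Complex.exp (-(c * z)))
      (Complex.exp (-(c * z))) z := by
    intro z
    refine (((hasDerivAt_id z).const_mul c).neg.cexp.const_mul (-c⁻¹)).congr_deriv ?_
    field_simp
    rfl
  have B : Tendsto (fun t : ℝ => -c⁻¹ * Complex.exp (-(c * t))) atTop (𝓝 (-c⁻¹ * 0)) := by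
    refine Tendsto.const_mul _ (tendsto_zero_iff_norm_tendsto_zero.mpr ?_)
    simp_rw [norm_cexp_neg_mul, neg_mul_eq_neg_mul]
    exact Real.tendsto_exp_atBot.comp (tendsto_id.const_mul_atTop_of_neg (neg_lt_zero.2 hc))
  have := integral_Ioi_of_hasDerivAt_of_tendsto' (a := 0)
    (fun t _ => (A (t : ℂ)).comp_ofReal) (integrableOn_cexp c hc) B
  rw [this]
  simp [hc0, one_div]

lemma fourier_w (u : ℝ) :
    ∫ t : ℝ, (Real.exp (-2 * |t|) : ℂ) * Complex.exp (-(Complex.I * u * t))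
      = 4 / (4 + (u : ℂ) ^ 2) := by
  have h1 : (0:ℝ) < (2 + Complex.I * u).re := by simp
  have h2 : (0:ℝ) < (2 - Complex.I * u).re := by simp
  set f : ℝ → ℂ := fun t => (Real.exp (-2 * |t|) : ℂ) * Complex.exp (-(Complex.I * u * t))
    with hf
  have hIoi : ∀ t ∈ Ioi (0:ℝ), f t = Complex.exp (-((2 + Complex.I * u) * t)) := by
    intro t ht
    rw [hf]
    simp only
    rw [abs_of_pos ht, Complex.ofReal_exp, ← Complex.exp_add]
    congr 1
    push_cast
    ring
  have hIic : ∀ t ∈ Ioi (0:ℝ), Complex.exp (-((2 - Complex.I * u) * t)) = f (-t) := by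
    intro t ht
    rw [hf]
    simp only
    rw [abs_neg, abs_of_pos ht, Complex.ofReal_exp, ← Complex.exp_add]
    congr 1
    push_cast
    ring
  have hI1 : IntegrableOn f (Ioi 0) :=
    (integrableOn_cexp _ h1).congr_fun (fun t ht => (hIoi t ht).symm) measurableSet_Ioi
  have hI2 : IntegrableOn f (Iic 0) := by
    rw [← Measure.map_neg_eq_self (volume : Measure ℝ)]
    have m : MeasurableEmbedding fun x : ℝ => -x := (Homeomorph.neg ℝ).measurableEmbedding
    rw [m.integrableOn_map_iff]
    simp_rw [Function.comp_def, neg_preimage, neg_Iic, neg_zero]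
    rw [integrableOn_Ici_iff_integrableOn_Ioi]
    exact (integrableOn_cexp _ h2).congr_fun hIic measurableSet_Ioi
  have e1 : ∫ t in Ioi (0:ℝ), f t = 1 / (2 + Complex.I * u) := by
    rw [setIntegral_congr_fun measurableSet_Ioi hIoi, integral_cexp_Ioi _ h1]
  have e2 : ∫ t in Set.Iic (0:ℝ), f t = 1 / (2 - Complex.I * u) := by
    have hcn := integral_comp_neg_Ioi (0:ℝ) f
    rw [neg_zero] at hcn
    rw [← hcn, setIntegral_congr_fun measurableSet_Ioi (fun t ht => (hIic t ht).symm),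
      integral_cexp_Ioi _ h2]
  have d1 : (2 + Complex.I * u) ≠ 0 := fun h => by
    have := congrArg Complex.re h; simp at this
  have d2 : (2 - Complex.I * u) ≠ 0 := fun h => by
    have := congrArg Complex.re h; simp at this
  have d3 : (4 + (u:ℂ)^2) ≠ 0 := by
    have : ((4 + u^2 : ℝ) : ℂ) ≠ 0 := by
      rw [Complex.ofReal_ne_zero]
      positivity
    simpa using this
  rw [← intervalIntegral.integral_Iic_add_Ioi hI2 hI1, e1, e2]
  field_simp
  ring_nf
  rw [Complex.I_sq]
  ring

lemma integrable_exp_neg_two_abs : Integrable (fun t : ℝ => Real.exp (-2 * |t|)) := by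
  have h1 : IntegrableOn (fun t : ℝ => Real.exp (-2 * |t|)) (Ioi 0) := by
    refine (exp_neg_integrableOn_Ioi 0 (by norm_num : (0:ℝ) < 2)).congr_fun ?_ measurableSet_Ioi
    intro t ht
    simp only [abs_of_pos (Set.mem_Ioi.mp ht)]
  have h2 : IntegrableOn (fun t : ℝ => Real.exp (-2 * |t|)) (Iic 0) := by
    rw [← Measure.map_neg_eq_self (volume : Measure ℝ)]
    have m : MeasurableEmbedding fun x : ℝ => -x := (Homeomorph.neg ℝ).measurableEmbedding
    rw [m.integrableOn_map_iff]
    simp_rw [Function.comp_def, abs_neg, neg_preimage, neg_Iic, neg_zero]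
    exact Iff.mpr integrableOn_Ici_iff_integrableOn_Ioi h1
  rw [← integrableOn_univ, ← Set.Iic_union_Ioi (a := (0:ℝ))]
  exact h2.union h1

lemma pair (L γ γ' : ℝ) :
    Complex.exp (Complex.I * ((γ:ℂ) - (γ':ℂ)) * L) * (4 / (4 + ((γ:ℂ) - (γ':ℂ)) ^ 2))
      = ∫ t : ℝ, (Real.exp (-2 * |t|) : ℂ) *
          (Complex.exp (Complex.I * γ * ((L:ℂ) - t)) *
            (starRingEnd ℂ) (Complex.exp (Complex.I * γ' * ((L:ℂ) - t)))) := by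
  have hu : ((γ:ℂ) - (γ':ℂ)) = ((γ - γ' : ℝ) : ℂ) := by push_cast; ring
  rw [hu, ← fourier_w (γ - γ'), ← integral_const_mul]
  congr 1
  funext t
  rw [← Complex.exp_conj]
  simp only [map_mul, Complex.conj_I, map_sub, Complex.conj_ofReal]
  rw [← Complex.exp_add, ← mul_assoc,
    mul_comm (Complex.exp _) ((Real.exp (-2 * |t|) : ℝ) : ℂ), mul_assoc, ← Complex.exp_add]
  congr 2
  push_cast
  ring

end FRealNonnegAux

open FRealNonnegAux in
theorem F_real_nonneg (Γ : Finset ℝ) (x : ℝ) (hx : 0 < x) :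
    (∑ γ ∈ Γ, ∑ γ' ∈ Γ,
        Complex.exp (Complex.I * ((γ : ℂ) - (γ' : ℂ)) * Real.log x)
          * (4 / (4 + ((γ : ℂ) - (γ' : ℂ)) ^ 2))).im = 0 ∧
    0 ≤ (∑ γ ∈ Γ, ∑ γ' ∈ Γ,
        Complex.exp (Complex.I * ((γ : ℂ) - (γ' : ℂ)) * Real.log x)
          * (4 / (4 + ((γ : ℂ) - (γ' : ℂ)) ^ 2))).re := by
  set L : ℝ := Real.log x with hL
  set T : ℝ → ℝ → ℝ → ℂ := fun γ γ' t => (Real.exp (-2 * |t|) : ℂ) *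
      (Complex.exp (Complex.I * γ * ((L:ℂ) - t)) *
        (starRingEnd ℂ) (Complex.exp (Complex.I * γ' * ((L:ℂ) - t)))) with hT
  have hint : ∀ γ γ' : ℝ, Integrable (T γ γ') := by
    intro γ γ'
    have cont : Continuous (T γ γ') := by
      rw [hT]
      exact (Complex.continuous_ofReal.comp (by fun_prop)).mul
        ((Complex.continuous_exp.comp (by fun_prop)).mul
          (Complex.continuous_conj.comp (Complex.continuous_exp.comp (by fun_prop))))
    refine Integrable.mono' integrable_exp_neg_two_abs cont.aestronglyMeasurable ?_
    filter_upwards with t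
    rw [hT]
    simp only
    rw [norm_mul, norm_mul]
    have h1 : ‖Complex.exp (Complex.I * γ * ((L:ℂ) - t))‖ = 1 := by
      rw [Complex.norm_exp]
      simp [Complex.mul_re, Complex.mul_im]
    have h2 : ‖(starRingEnd ℂ) (Complex.exp (Complex.I * γ' * ((L:ℂ) - t)))‖ = 1 := by
      rw [RCLike.norm_conj, Complex.norm_exp]
      simp [Complex.mul_re, Complex.mul_im]
    rw [h1, h2, mul_one, mul_one, Complex.norm_real, Real.norm_eq_abs,
      _root_.abs_of_nonneg (Real.exp_pos _).le]
  have hsum : (∑ γ ∈ Γ, ∑ γ' ∈ Γ,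
        Complex.exp (Complex.I * ((γ : ℂ) - (γ' : ℂ)) * L)
          * (4 / (4 + ((γ : ℂ) - (γ' : ℂ)) ^ 2)))
      = Complex.ofReal (∫ t : ℝ, Real.exp (-2 * |t|) *
          Complex.normSq (∑ γ ∈ Γ, Complex.exp (Complex.I * γ * ((L:ℂ) - t)))) := by
    calc (∑ γ ∈ Γ, ∑ γ' ∈ Γ,
          Complex.exp (Complex.I * ((γ : ℂ) - (γ' : ℂ)) * L)
            * (4 / (4 + ((γ : ℂ) - (γ' : ℂ)) ^ 2)))
        = ∑ γ ∈ Γ, ∑ γ' ∈ Γ, ∫ t : ℝ, T γ γ' t := by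
          refine Finset.sum_congr rfl fun γ _ => Finset.sum_congr rfl fun γ' _ => ?_
          exact pair L γ γ'
      _ = ∑ γ ∈ Γ, ∫ t : ℝ, ∑ γ' ∈ Γ, T γ γ' t := by
          refine Finset.sum_congr rfl fun γ _ => ?_
          exact (integral_finset_sum Γ (fun γ' _ => hint γ γ')).symm
      _ = ∫ t : ℝ, ∑ γ ∈ Γ, ∑ γ' ∈ Γ, T γ γ' t :=
          (integral_finset_sum Γ (fun γ _ =>
            integrable_finset_sum Γ (fun γ' _ => hint γ γ'))).symm
      _ = ∫ t : ℝ, Complex.ofReal (Real.exp (-2 * |t|) *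
            Complex.normSq (∑ γ ∈ Γ, Complex.exp (Complex.I * γ * ((L:ℂ) - t)))) := by
          congr 1
          funext t
          rw [hT]
          simp only
          simp_rw [← Finset.mul_sum]
          rw [← Finset.sum_mul, ← map_sum, Complex.mul_conj, ← Complex.ofReal_mul]
      _ = _ := integral_ofReal
  rw [hsum]
  refine ⟨Complex.ofReal_im _, ?_⟩
  rw [Complex.ofReal_re]
  refine integral_nonneg fun t => ?_
  exact mul_nonneg (Real.exp_pos _).le (Complex.normSq_nonneg _)
end
end
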